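/- Let p > 1 and q := p/(p−1). Let ξ be a real random variable with E ξ = 0 such that ( E|ξ|^r )^{1/r} ≤ K · r^{1/q} for every r ≥ 1, where K ∈ (0,∞). Then there exists a finite constant C₃ depending only on p such that for every λ ∈ R, E exp(λξ) ≤ exp( C₃ · max( (K|λ|)^p, (K|λ|)² ) ); in particular ξ belongs to B(φ_p) for φ_p(λ) := max(|λ|^p, λ²) with ‖ξ‖B(φ_p) bounded by a constant (depending only on p) times K. -/

import Mathlib

open MeasureTheory Real ENNReal

lemma exp_tsum (x : ℝ) : Real.exp x = ∑' n : ℕ, x ^ n / n.factorial := by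
  rw [Real.exp_eq_exp_ℝ, NormedSpace.exp_eq_tsum_div]

lemma pow_self_div_factorial_le (n : ℕ) : (n : ℝ) ^ n / n.factorial ≤ Real.exp n := by
  rw [exp_tsum]
  exact Summable.le_tsum (Real.summable_pow_div_factorial _) n (fun k _ => by positivity)

lemma one_add_le_exp_quarter (t : ℝ) (ht : 0 ≤ t) : 1 + t + t ^ 2 / 4 ≤ Real.exp t := by
  have e1 : Real.exp t = Real.exp (t / 2) * Real.exp (t / 2) := by
    rw [← Real.exp_add]; ring_nf
  nlinarith [Real.add_one_le_exp (t / 2)]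

lemma exp_le_master (x : ℝ) :
    Real.exp x ≤ max (1 + x) 0 + 4 * (Real.exp |x| - 1 - |x|) := by
  rcases le_or_gt 0 x with hx | hx
  · rw [abs_of_nonneg hx, max_eq_left (by linarith)]
    nlinarith [Real.add_one_le_exp x]
  · rw [abs_of_neg hx]
    rcases le_or_gt (-1) x with hx1 | hx1
    · rw [max_eq_left (by linarith)]
      have hb := Real.exp_bound (x := x) (by rw [abs_of_neg hx]; linarith) (n := 2) (by norm_num)
      have hb' : Real.exp x ≤ 1 + x + |x| ^ 2 * (3 / 4) := by
        have h1 : ∑ m ∈ Finset.range 2, x ^ m / m.factorial = 1 + x := by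
          simp [Finset.sum_range_succ]
        have h2 := (abs_sub_le_iff.1 hb).1
        rw [h1] at h2
        norm_num [Nat.factorial] at h2
        rw [sq_abs] at *
        linarith
      have hq := one_add_le_exp_quarter (-x) (by linarith)
      have habs : |x| ^ 2 = x ^ 2 := sq_abs x
      nlinarith
    · have hq := one_add_le_exp_quarter (-x) (by linarith)
      have h1 : Real.exp x ≤ 1 := Real.exp_le_one_iff.2 (by linarith)
      have h2 : (0:ℝ) ≤ max (1 + x) 0 := le_max_right _ _
      nlinarith

set_option maxHeartbeats 1000000 in
theorem stmt16 (p : ℝ) (hp : 1 < p) (q : ℝ) (hq : q = p / (p - 1)) :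
    ∃ C₃ C' : ℝ, 0 < C₃ ∧ 0 < C' ∧
      ∀ (Ω : Type) (mΩ : MeasurableSpace Ω) (μ : Measure Ω),
        IsProbabilityMeasure μ → ∀ ξ : Ω → ℝ, Measurable ξ →
        Integrable ξ μ → (∫ ω, ξ ω ∂μ) = 0 →
        ∀ K : ℝ, 0 < K →
        (∀ r : ℝ, 1 ≤ r →
          (∫⁻ ω, ENNReal.ofReal (|ξ ω| ^ r) ∂μ) ^ (1 / r)
            ≤ ENNReal.ofReal (K * r ^ (1 / q))) →
        ∀ l : ℝ,
          (∫⁻ ω, ENNReal.ofReal (Real.exp (l * ξ ω)) ∂μ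
            ≤ ENNReal.ofReal (Real.exp (C₃ * max ((K * |l|) ^ p) ((K * |l|) ^ 2))))
          ∧
          (∫⁻ ω, ENNReal.ofReal (Real.exp (l * ξ ω)) ∂μ
            ≤ ENNReal.ofReal (Real.exp (max (|C' * K * l| ^ p) ((C' * K * l) ^ 2)))) := by
  have hpq : p.HolderConjugate q := (Real.holderConjugate_iff_eq_conjExponent hp).2 hq
  have hq1 : 1 < q := hpq.symm.lt
  have hq0 : (0:ℝ) < q := by linarith
  have hp0 : (0:ℝ) < p := by linarith
  have h1q : 1/q ≤ 1 := by rw [div_le_one hq0]; linarith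
  set e := Real.exp 1 with he
  have he2 : (2:ℝ) ≤ e := by have := Real.add_one_le_exp 1; linarith
  have helt : e < 2.7182818286 := Real.exp_one_lt_d9
  have he0 : (0:ℝ) < e := by linarith
  have h2e1 : (1:ℝ) ≤ 2*e := by linarith
  have h2e0 : (0:ℝ) < 2*e := by linarith
  have h2ep : (0:ℝ) < (2*e)^p := Real.rpow_pos_of_pos h2e0 p
  set C₃ := 64 + 2 * (2*e)^p with hC3
  have hC3pos : (0:ℝ) < C₃ := by positivity
  set C' := C₃ + 1 with hC'
  have hC'1 : (1:ℝ) ≤ C' := by linarith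
  refine ⟨C₃, C', hC3pos, by linarith, ?_⟩
  intro Ω mΩ μ hμ ξ hmeas hint hmean K hK hmom l
  set v := K * |l| with hv
  have hv0 : 0 ≤ v := mul_nonneg hK.le (abs_nonneg l)
  have main : ∫⁻ ω, ENNReal.ofReal (Real.exp (l * ξ ω)) ∂μ
      ≤ ENNReal.ofReal (Real.exp (C₃ * max (v ^ p) (v ^ 2))) := by
    have hM0 : (0:ℝ) ≤ max (v ^ p) (v ^ 2) := le_trans (sq_nonneg v) (le_max_right _ _)
    have hmom' : ∀ r : ℝ, 1 ≤ r →
        ∫⁻ ω, ENNReal.ofReal (|ξ ω| ^ r) ∂μ ≤ ENNReal.ofReal ((K * r ^ (1/q)) ^ r) := by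
      intro r hr
      have hr0 : (0:ℝ) < r := by linarith
      have h := hmom r hr
      calc ∫⁻ ω, ENNReal.ofReal (|ξ ω| ^ r) ∂μ
          = ((∫⁻ ω, ENNReal.ofReal (|ξ ω| ^ r) ∂μ) ^ (1/r)) ^ r := by
            rw [← ENNReal.rpow_mul, one_div_mul_cancel hr0.ne', ENNReal.rpow_one]
        _ ≤ (ENNReal.ofReal (K * r ^ (1/q))) ^ r := ENNReal.rpow_le_rpow h hr0.le
        _ = ENNReal.ofReal ((K * r ^ (1/q)) ^ r) :=
            ENNReal.ofReal_rpow_of_nonneg (by positivity) hr0.le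
    have hmomn : ∀ n : ℕ, 1 ≤ n →
        ∫⁻ ω, ENNReal.ofReal (|ξ ω| ^ n) ∂μ ≤ ENNReal.ofReal ((K * (n:ℝ) ^ (1/q)) ^ n) := by
      intro n hn
      have hn1 : (1:ℝ) ≤ (n:ℝ) := by exact_mod_cast hn
      have h := hmom' (n:ℝ) hn1
      simpa [Real.rpow_natCast] using h
    have hfact : ∀ n : ℕ, (n:ℝ)^n / n.factorial ≤ e^n := by
      intro n
      have h := pow_self_div_factorial_le n
      rwa [show Real.exp (n:ℝ) = e^n from by rw [he, ← Real.exp_nat_mul, mul_one]] at h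
    by_cases hsmall : e * v ≤ 1/2
    · -- small regime
      have hmeas1 : Measurable fun ω => ENNReal.ofReal (max (1 + l * ξ ω) 0) :=
        (((hmeas.const_mul l).const_add 1).max measurable_const).ennreal_ofReal
      have step1 : ∫⁻ ω, ENNReal.ofReal (Real.exp (l * ξ ω)) ∂μ ≤
          (∫⁻ ω, ENNReal.ofReal (max (1 + l * ξ ω) 0) ∂μ) +
          ∫⁻ ω, ENNReal.ofReal (4 * (Real.exp |l * ξ ω| - 1 - |l * ξ ω|)) ∂μ := by
        rw [← lintegral_add_left hmeas1]
        apply lintegral_mono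
        intro ω
        calc ENNReal.ofReal (Real.exp (l * ξ ω))
            ≤ ENNReal.ofReal (max (1 + l * ξ ω) 0 + 4 * (Real.exp |l * ξ ω| - 1 - |l * ξ ω|)) :=
              ENNReal.ofReal_le_ofReal (exp_le_master _)
          _ ≤ _ := ENNReal.ofReal_add_le
      -- second moment
      have hmom2 : ∫⁻ ω, ENNReal.ofReal ((ξ ω)^2) ∂μ ≤ ENNReal.ofReal (4 * K^2) := by
        have h2 := hmomn 2 (by norm_num)
        push_cast at h2
        calc ∫⁻ ω, ENNReal.ofReal ((ξ ω)^2) ∂μ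
            = ∫⁻ ω, ENNReal.ofReal (|ξ ω|^2) ∂μ := by simp [sq_abs]
          _ ≤ ENNReal.ofReal ((K * (2:ℝ) ^ (1/q))^2) := h2
          _ ≤ ENNReal.ofReal (4 * K^2) := by
              apply ENNReal.ofReal_le_ofReal
              have h21 : (2:ℝ) ^ (1/q) ≤ 2 := by
                calc (2:ℝ) ^ (1/q) ≤ (2:ℝ) ^ (1:ℝ) :=
                      Real.rpow_le_rpow_of_exponent_le one_le_two h1q
                  _ = 2 := Real.rpow_one 2
              have h2nn : (0:ℝ) ≤ (2:ℝ) ^ (1/q) := Real.rpow_nonneg (by norm_num) _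
              rw [mul_pow]
              nlinarith [mul_le_mul h21 h21 h2nn (by norm_num : (0:ℝ) ≤ 2), sq_nonneg K]
      have hξ2meas : Measurable fun ω => (ξ ω)^2 := hmeas.pow_const 2
      have hint2 : Integrable (fun ω => (ξ ω)^2) μ := by
        refine ⟨hξ2meas.aestronglyMeasurable, ?_⟩
        rw [hasFiniteIntegral_iff_ofReal (ae_of_all _ fun ω => sq_nonneg _)]
        exact lt_of_le_of_lt hmom2 ENNReal.ofReal_lt_top
      have hty : ∫ ω, (ξ ω)^2 ∂μ ≤ 4 * K^2 := by
        have hnn : 0 ≤ᵐ[μ] fun ω => (ξ ω)^2 := ae_of_all _ fun ω => sq_nonneg _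
        have heq := MeasureTheory.ofReal_integral_eq_lintegral_ofReal hint2 hnn
        rw [← ENNReal.ofReal_le_ofReal_iff (by positivity), heq]
        exact hmom2
      have term1 : ∫⁻ ω, ENNReal.ofReal (max (1 + l * ξ ω) 0) ∂μ
          ≤ ENNReal.ofReal (1 + 4 * v^2) := by
        have hg1 : Integrable (fun ω => 1 + l * ξ ω) μ :=
          (integrable_const 1).add (hint.const_mul l)
        have hg : Integrable (fun ω => 1 + l * ξ ω + l^2 * (ξ ω)^2) μ :=
          hg1.add (hint2.const_mul (l^2))
        have hgnn : 0 ≤ᵐ[μ] fun ω => 1 + l * ξ ω + l^2 * (ξ ω)^2 :=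
          ae_of_all _ fun ω => by
            show (0:ℝ) ≤ 1 + l * ξ ω + l^2 * (ξ ω)^2
            nlinarith [sq_nonneg (2 * (l * ξ ω) + 1)]
        calc ∫⁻ ω, ENNReal.ofReal (max (1 + l * ξ ω) 0) ∂μ
            ≤ ∫⁻ ω, ENNReal.ofReal (1 + l * ξ ω + l^2 * (ξ ω)^2) ∂μ := by
              apply lintegral_mono; intro ω
              apply ENNReal.ofReal_le_ofReal
              apply max_le (by nlinarith [sq_nonneg (l * ξ ω)]) (by nlinarith [sq_nonneg (2 * (l * ξ ω) + 1)])
          _ = ENNReal.ofReal (∫ ω, (1 + l * ξ ω + l^2 * (ξ ω)^2) ∂μ) :=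
              (MeasureTheory.ofReal_integral_eq_lintegral_ofReal hg hgnn).symm
          _ ≤ ENNReal.ofReal (1 + 4 * v^2) := by
              apply ENNReal.ofReal_le_ofReal
              rw [integral_add hg1 (hint2.const_mul (l^2)),
                integral_add (integrable_const 1) (hint.const_mul l),
                integral_const, integral_const_mul, integral_const_mul, hmean]
              simp only [probReal_univ, measure_univ, ENNReal.toReal_one, smul_eq_mul, one_mul, mul_zero, add_zero]
              have hv2 : v^2 = K^2 * l^2 := by rw [hv, mul_pow, sq_abs]
              nlinarith [sq_nonneg l, hty]
      have real_small : ∀ k : ℕ, |l|^(k+2) / ((k+2).factorial : ℝ) * (K * ((k+2:ℕ):ℝ) ^ (1/q))^(k+2)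
          ≤ (e*v)^2 * (1/2)^k := by
        intro k
        set n := k + 2 with hn
        have hn1 : (1:ℝ) ≤ (n:ℝ) := by exact_mod_cast Nat.one_le_iff_ne_zero.2 (by omega)
        have h1 : ((n:ℝ) ^ (1/q)) ≤ (n:ℝ) := by
          calc ((n:ℝ) ^ (1/q)) ≤ (n:ℝ) ^ (1:ℝ) := Real.rpow_le_rpow_of_exponent_le hn1 h1q
            _ = (n:ℝ) := Real.rpow_one _
        have h2 : (K * (n:ℝ) ^ (1/q))^n ≤ K^n * (n:ℝ)^n := by
          rw [mul_pow]
          exact mul_le_mul_of_nonneg_left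
            (pow_le_pow_left₀ (Real.rpow_nonneg (Nat.cast_nonneg n) _) h1 n) (by positivity)
        have hfacpos : (0:ℝ) < (n.factorial : ℝ) := by exact_mod_cast n.factorial_pos
        have h4 : (e*v)^n ≤ (e*v)^2 * (1/2)^k := by
          rw [hn, pow_add, mul_comm]
          exact mul_le_mul_of_nonneg_left
            (pow_le_pow_left₀ (by positivity) hsmall k) (by positivity)
        calc |l|^n / (n.factorial : ℝ) * (K * (n:ℝ) ^ (1/q))^n
            ≤ |l|^n / (n.factorial : ℝ) * (K^n * (n:ℝ)^n) :=
              mul_le_mul_of_nonneg_left h2 (by positivity)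
          _ = v^n * ((n:ℝ)^n / (n.factorial : ℝ)) := by rw [hv, mul_pow]; ring
          _ ≤ v^n * e^n := mul_le_mul_of_nonneg_left (hfact n) (by positivity)
          _ = (e*v)^n := by rw [mul_pow]; ring
          _ ≤ (e*v)^2 * (1/2)^k := h4
      have term2 : ∫⁻ ω, ENNReal.ofReal (4 * (Real.exp |l * ξ ω| - 1 - |l * ξ ω|)) ∂μ
          ≤ ENNReal.ofReal (4 * ((e*v)^2 * 2)) := by
        have hmeas2 : Measurable fun ω => ENNReal.ofReal (Real.exp |l * ξ ω| - 1 - |l * ξ ω|) :=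
          (((Real.measurable_exp.comp (hmeas.const_mul l).abs).sub measurable_const).sub
            (hmeas.const_mul l).abs).ennreal_ofReal
        have hofr : ∀ ω, ENNReal.ofReal (4 * (Real.exp |l * ξ ω| - 1 - |l * ξ ω|)) =
            ENNReal.ofReal 4 * ENNReal.ofReal (Real.exp |l * ξ ω| - 1 - |l * ξ ω|) := fun ω =>
          ENNReal.ofReal_mul (by norm_num)
        simp_rw [hofr]
        rw [lintegral_const_mul _ hmeas2]
        have key : ∫⁻ ω, ENNReal.ofReal (Real.exp |l * ξ ω| - 1 - |l * ξ ω|) ∂μ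
            ≤ ENNReal.ofReal ((e*v)^2 * 2) := by
          have hrw : ∀ ω, ENNReal.ofReal (Real.exp |l * ξ ω| - 1 - |l * ξ ω|) =
              ∑' k : ℕ, ENNReal.ofReal (|l|^(k+2) / ((k+2).factorial : ℝ) * |ξ ω|^(k+2)) := by
            intro ω
            set t := |l * ξ ω| with ht
            have ht0 : 0 ≤ t := abs_nonneg _
            have hsum := Real.summable_pow_div_factorial t
            have hsum2 : Summable (fun k : ℕ => t^(k+2) / ((k+2).factorial : ℝ)) :=
              (summable_nat_add_iff 2).2 hsum
            have htail : ∑' k : ℕ, t^(k+2) / ((k+2).factorial : ℝ) = Real.exp t - 1 - t := by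
              have h := Summable.sum_add_tsum_nat_add 2 hsum
              have hrange : ∑ i ∈ Finset.range 2, t^i / (i.factorial : ℝ) = 1 + t := by
                simp [Finset.sum_range_succ]
              rw [← exp_tsum t, hrange] at h
              linarith
            calc ENNReal.ofReal (Real.exp t - 1 - t)
                = ENNReal.ofReal (∑' k : ℕ, t^(k+2) / ((k+2).factorial : ℝ)) := by rw [htail]
              _ = ∑' k : ℕ, ENNReal.ofReal (t^(k+2) / ((k+2).factorial : ℝ)) :=
                  ENNReal.ofReal_tsum_of_nonneg (fun k => by positivity) hsum2
              _ = ∑' k : ℕ, ENNReal.ofReal (|l|^(k+2) / ((k+2).factorial : ℝ) * |ξ ω|^(k+2)) := by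
                  congr 1; funext k; congr 1
                  rw [ht, abs_mul, mul_pow]; ring
          simp_rw [hrw]
          rw [lintegral_tsum (fun k : ℕ =>
            Measurable.aemeasurable (f := fun ω => ENNReal.ofReal (|l|^(k+2) / ((k+2).factorial : ℝ) * |ξ ω|^(k+2)))
              ((measurable_const.mul ((hmeas.abs).pow_const _)).ennreal_ofReal))]
          have perk : ∀ k : ℕ, ∫⁻ ω, ENNReal.ofReal (|l|^(k+2) / ((k+2).factorial : ℝ) * |ξ ω|^(k+2)) ∂μ
              ≤ ENNReal.ofReal ((e*v)^2 * (1/2)^k) := by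
            intro k
            have hc : (0:ℝ) ≤ |l|^(k+2) / ((k+2).factorial : ℝ) := by positivity
            calc ∫⁻ ω, ENNReal.ofReal (|l|^(k+2) / ((k+2).factorial : ℝ) * |ξ ω|^(k+2)) ∂μ
                = ENNReal.ofReal (|l|^(k+2) / ((k+2).factorial : ℝ)) *
                    ∫⁻ ω, ENNReal.ofReal (|ξ ω|^(k+2)) ∂μ := by
                  simp_rw [ENNReal.ofReal_mul hc]
                  rw [lintegral_const_mul _ ((hmeas.abs.pow_const _).ennreal_ofReal)]
              _ ≤ ENNReal.ofReal (|l|^(k+2) / ((k+2).factorial : ℝ)) *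
                    ENNReal.ofReal ((K * ((k+2:ℕ):ℝ) ^ (1/q))^(k+2)) :=
                  mul_le_mul_right (hmomn (k+2) (by omega)) _
              _ = ENNReal.ofReal (|l|^(k+2) / ((k+2).factorial : ℝ) *
                    (K * ((k+2:ℕ):ℝ) ^ (1/q))^(k+2)) := (ENNReal.ofReal_mul hc).symm
              _ ≤ ENNReal.ofReal ((e*v)^2 * (1/2)^k) := ENNReal.ofReal_le_ofReal (real_small k)
          calc ∑' k : ℕ, ∫⁻ ω, ENNReal.ofReal (|l|^(k+2) / ((k+2).factorial : ℝ) * |ξ ω|^(k+2)) ∂μ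
              ≤ ∑' k : ℕ, ENNReal.ofReal ((e*v)^2 * (1/2)^k) := ENNReal.tsum_le_tsum perk
            _ = ENNReal.ofReal (∑' k : ℕ, (e*v)^2 * (1/2)^k) :=
                (ENNReal.ofReal_tsum_of_nonneg (fun k => by positivity)
                  ((summable_geometric_of_lt_one (by norm_num) (by norm_num)).mul_left _)).symm
            _ = ENNReal.ofReal ((e*v)^2 * 2) := by
                rw [tsum_mul_left, tsum_geometric_of_lt_one (by norm_num) (by norm_num)]
                norm_num
        calc ENNReal.ofReal 4 * ∫⁻ ω, ENNReal.ofReal (Real.exp |l * ξ ω| - 1 - |l * ξ ω|) ∂μ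
            ≤ ENNReal.ofReal 4 * ENNReal.ofReal ((e*v)^2 * 2) := mul_le_mul_right key _
          _ = ENNReal.ofReal (4 * ((e*v)^2 * 2)) := (ENNReal.ofReal_mul (by norm_num)).symm
      calc ∫⁻ ω, ENNReal.ofReal (Real.exp (l * ξ ω)) ∂μ
          ≤ _ := step1
        _ ≤ ENNReal.ofReal (1 + 4 * v^2) + ENNReal.ofReal (4 * ((e*v)^2 * 2)) :=
            add_le_add term1 term2
        _ = ENNReal.ofReal (1 + 4 * v^2 + 4 * ((e*v)^2 * 2)) :=
            (ENNReal.ofReal_add (by positivity) (by positivity)).symm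
        _ ≤ ENNReal.ofReal (Real.exp (C₃ * max (v ^ p) (v ^ 2))) := by
            apply ENNReal.ofReal_le_ofReal
            have hc : 4 + 8 * e^2 ≤ C₃ := by rw [hC3]; nlinarith
            have hmul : (4 + 8 * e^2) * v^2 ≤ C₃ * max (v ^ p) (v ^ 2) :=
              mul_le_mul hc (le_max_right _ _) (sq_nonneg v) hC3pos.le
            have hexp := Real.add_one_le_exp (C₃ * max (v ^ p) (v ^ 2))
            nlinarith
    · -- large regime
      push_neg at hsmall
      have hKq : (0:ℝ) < K ^ q := Real.rpow_pos_of_pos hK q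
      set s := 1 / (2 * e * q * K ^ q) with hs
      have hs0 : 0 < s := by positivity
      set t0 := (2*e) ^ (1/q) * K with ht0
      have h2eq : (0:ℝ) < (2*e) ^ (1/q) := Real.rpow_pos_of_pos h2e0 _
      have ht0pos : 0 < t0 := by positivity
      have ht0q : t0 ^ q = 2 * e * K ^ q := by
        rw [ht0, Real.mul_rpow (by positivity) hK.le, ← Real.rpow_mul (by positivity),
          one_div_mul_cancel hq0.ne', Real.rpow_one]
      set T := ((2*e) ^ (1/q) * v) ^ p / p with hT
      have young : ∀ ω, Real.exp (l * ξ ω) ≤ Real.exp T * Real.exp (s * |ξ ω| ^ q) := by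
        intro ω
        rw [← Real.exp_add]
        apply Real.exp_le_exp.2
        have hy := Real.young_inequality_of_nonneg
          (mul_nonneg h2eq.le hv0) (by positivity : (0:ℝ) ≤ |ξ ω| / t0) hpq
        have hab : ((2*e) ^ (1/q) * v) * (|ξ ω| / t0) = |l| * |ξ ω| := by
          rw [hv, ht0]; field_simp
        have hbq : (|ξ ω| / t0) ^ q / q = s * |ξ ω| ^ q := by
          rw [Real.div_rpow (abs_nonneg _) ht0pos.le, ht0q, hs]
          field_simp
        calc l * ξ ω ≤ |l| * |ξ ω| := by rw [← abs_mul]; exact le_abs_self _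
          _ = ((2*e) ^ (1/q) * v) * (|ξ ω| / t0) := hab.symm
          _ ≤ ((2*e) ^ (1/q) * v) ^ p / p + (|ξ ω| / t0) ^ q / q := hy
          _ = T + s * |ξ ω| ^ q := by rw [hT, hbq]
      have hmeasq : Measurable fun ω => ENNReal.ofReal (Real.exp (s * |ξ ω| ^ q)) :=
        (Real.measurable_exp.comp
          (((Real.continuous_rpow_const hq0.le).measurable.comp hmeas.abs).const_mul s)).ennreal_ofReal
      have real_large : ∀ n : ℕ, 1 ≤ n →
          s^n / (n.factorial : ℝ) * (K * (q * (n:ℝ)) ^ (1/q)) ^ (q * (n:ℝ)) ≤ (1/2)^n := by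
        intro n hn
        have hn0 : (0:ℝ) < (n:ℝ) := by exact_mod_cast hn
        have hqn0 : (0:ℝ) < q * (n:ℝ) := by positivity
        have hb : (K * (q * (n:ℝ)) ^ (1/q)) ^ (q * (n:ℝ)) = (K^q * (q * (n:ℝ)))^n := by
          rw [Real.rpow_mul (by positivity) q (n:ℝ), Real.rpow_natCast]
          congr 1
          rw [Real.mul_rpow hK.le (by positivity), ← Real.rpow_mul hqn0.le,
            one_div_mul_cancel hq0.ne', Real.rpow_one]
        rw [hb]
        have hw : s * K^q * q * e = 1/2 := by
          rw [hs]; field_simp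
        have hfacpos : (0:ℝ) < (n.factorial : ℝ) := by exact_mod_cast n.factorial_pos
        calc s^n / (n.factorial : ℝ) * (K^q * (q * (n:ℝ)))^n
            = (s * K^q * q)^n * ((n:ℝ)^n / (n.factorial : ℝ)) := by
              rw [mul_pow, mul_pow, mul_pow]; ring
          _ ≤ (s * K^q * q)^n * e^n :=
              mul_le_mul_of_nonneg_left (hfact n) (by positivity)
          _ = (s * K^q * q * e)^n := by rw [mul_pow (s * K^q * q) e n]
          _ = (1/2)^n := by rw [hw]
      have expmom : ∫⁻ ω, ENNReal.ofReal (Real.exp (s * |ξ ω| ^ q)) ∂μ ≤ 2 := by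
        have hrw : ∀ ω, ENNReal.ofReal (Real.exp (s * |ξ ω| ^ q)) =
            ∑' n : ℕ, ENNReal.ofReal (s^n / (n.factorial : ℝ) * |ξ ω| ^ (q * (n:ℝ))) := by
          intro ω
          rw [exp_tsum, ENNReal.ofReal_tsum_of_nonneg (fun n => by positivity)
            (Real.summable_pow_div_factorial _)]
          congr 1; funext n
          congr 1
          rw [mul_pow, ← Real.rpow_natCast (|ξ ω| ^ q) n, ← Real.rpow_mul (abs_nonneg _)]
          ring
        have hmint : ∀ n : ℕ, Measurable fun ω =>
            ENNReal.ofReal (s^n / (n.factorial : ℝ) * |ξ ω| ^ (q * (n:ℝ))) := by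
          intro n
          apply Measurable.ennreal_ofReal
          exact measurable_const.mul
            (((Real.continuous_rpow_const (by positivity)).measurable).comp hmeas.abs)
        simp_rw [hrw]
        rw [lintegral_tsum (fun n => (hmint n).aemeasurable)]
        have pern : ∀ n : ℕ, ∫⁻ ω, ENNReal.ofReal (s^n / (n.factorial : ℝ) * |ξ ω| ^ (q * (n:ℝ))) ∂μ
            ≤ ENNReal.ofReal ((1/2)^n) := by
          intro n
          rcases Nat.eq_zero_or_pos n with h0 | hn
          · subst h0
            simp [Real.rpow_zero, measure_univ]
          · have hqn1 : (1:ℝ) ≤ q * (n:ℝ) := by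
              have hn1 : (1:ℝ) ≤ (n:ℝ) := by exact_mod_cast hn
              nlinarith
            have hc : (0:ℝ) ≤ s^n / (n.factorial : ℝ) := by positivity
            calc ∫⁻ ω, ENNReal.ofReal (s^n / (n.factorial : ℝ) * |ξ ω| ^ (q * (n:ℝ))) ∂μ
                = ENNReal.ofReal (s^n / (n.factorial : ℝ)) *
                    ∫⁻ ω, ENNReal.ofReal (|ξ ω| ^ (q * (n:ℝ))) ∂μ := by
                  have hm2 : Measurable fun ω => ENNReal.ofReal (|ξ ω| ^ (q * (n:ℝ))) := by
                    apply Measurable.ennreal_ofReal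
                    exact ((Real.continuous_rpow_const (by positivity)).measurable).comp hmeas.abs
                  simp_rw [ENNReal.ofReal_mul hc]
                  rw [lintegral_const_mul _ hm2]
              _ ≤ ENNReal.ofReal (s^n / (n.factorial : ℝ)) *
                    ENNReal.ofReal ((K * (q * (n:ℝ)) ^ (1/q)) ^ (q * (n:ℝ))) :=
                  mul_le_mul_right (hmom' (q * (n:ℝ)) hqn1) _
              _ = ENNReal.ofReal (s^n / (n.factorial : ℝ) *
                    (K * (q * (n:ℝ)) ^ (1/q)) ^ (q * (n:ℝ))) := (ENNReal.ofReal_mul hc).symm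
              _ ≤ ENNReal.ofReal ((1/2)^n) := ENNReal.ofReal_le_ofReal (real_large n hn)
        calc ∑' n : ℕ, ∫⁻ ω, ENNReal.ofReal (s^n / (n.factorial : ℝ) * |ξ ω| ^ (q * (n:ℝ))) ∂μ
            ≤ ∑' n : ℕ, ENNReal.ofReal ((1/2:ℝ)^n) := ENNReal.tsum_le_tsum pern
          _ = ENNReal.ofReal (∑' n : ℕ, (1/2:ℝ)^n) :=
              (ENNReal.ofReal_tsum_of_nonneg (fun n => by positivity)
                (summable_geometric_of_lt_one (by norm_num) (by norm_num))).symm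
          _ = 2 := by
              rw [tsum_geometric_of_lt_one (by norm_num) (by norm_num)]
              norm_num
      have final_large : Real.exp T * 2 ≤ Real.exp (C₃ * max (v ^ p) (v ^ 2)) := by
        have hlog2 : Real.log 2 ≤ 1 := by
          have := Real.log_two_lt_d9; linarith
        have h2ev : (1:ℝ) ≤ 2*e*v := by nlinarith
        have hvp : (0:ℝ) ≤ v ^ p := Real.rpow_nonneg hv0 _
        have h1le : (1:ℝ) ≤ (2*e)^p * v^p := by
          calc (1:ℝ) = (1:ℝ) ^ p := (Real.one_rpow p).symm
            _ ≤ (2*e*v) ^ p := Real.rpow_le_rpow (by norm_num) h2ev hp0.le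
            _ = (2*e)^p * v^p := Real.mul_rpow h2e0.le hv0
        have hTle : T ≤ (2*e)^p * v^p := by
          rw [hT]
          have hnum : ((2*e) ^ (1/q) * v) ^ p = (2*e)^((1/q)*p) * v^p := by
            rw [Real.mul_rpow h2eq.le hv0, ← Real.rpow_mul h2e0.le]
          have hexple : (2*e)^((1/q)*p) ≤ (2*e)^p :=
            Real.rpow_le_rpow_of_exponent_le h2e1 (by nlinarith [mul_le_of_le_one_left hp0.le h1q])
          calc ((2*e) ^ (1/q) * v) ^ p / p ≤ ((2*e) ^ (1/q) * v) ^ p := by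
                apply div_le_self (by positivity) (by linarith)
            _ = (2*e)^((1/q)*p) * v^p := hnum
            _ ≤ (2*e)^p * v^p := mul_le_mul_of_nonneg_right hexple hvp
        have hexpsum : T + Real.log 2 ≤ C₃ * max (v ^ p) (v ^ 2) := by
          have hvpM : v ^ p ≤ max (v ^ p) (v ^ 2) := le_max_left _ _
          have : T + Real.log 2 ≤ 2 * ((2*e)^p * v^p) := by linarith
          calc T + Real.log 2 ≤ 2 * ((2*e)^p * v^p) := this
            _ ≤ C₃ * (v ^ p) := by
              rw [hC3]
              nlinarith [hvp, h2ep]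
            _ ≤ C₃ * max (v ^ p) (v ^ 2) :=
              mul_le_mul_of_nonneg_left hvpM hC3pos.le
        calc Real.exp T * 2 = Real.exp T * Real.exp (Real.log 2) := by
              rw [Real.exp_log (by norm_num)]
          _ = Real.exp (T + Real.log 2) := (Real.exp_add _ _).symm
          _ ≤ Real.exp (C₃ * max (v ^ p) (v ^ 2)) := Real.exp_le_exp.2 hexpsum
      calc ∫⁻ ω, ENNReal.ofReal (Real.exp (l * ξ ω)) ∂μ
          ≤ ∫⁻ ω, ENNReal.ofReal (Real.exp T) * ENNReal.ofReal (Real.exp (s * |ξ ω| ^ q)) ∂μ := by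
            exact lintegral_mono fun ω => le_trans (ENNReal.ofReal_le_ofReal (young ω))
              (le_of_eq (ENNReal.ofReal_mul (Real.exp_nonneg T)))
        _ = ENNReal.ofReal (Real.exp T) * ∫⁻ ω, ENNReal.ofReal (Real.exp (s * |ξ ω| ^ q)) ∂μ :=
            lintegral_const_mul _ hmeasq
        _ ≤ ENNReal.ofReal (Real.exp T) * 2 := mul_le_mul_right expmom _
        _ = ENNReal.ofReal (Real.exp T * 2) := by
            rw [ENNReal.ofReal_mul (Real.exp_nonneg T), ENNReal.ofReal_ofNat]
        _ ≤ ENNReal.ofReal (Real.exp (C₃ * max (v ^ p) (v ^ 2))) :=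
            ENNReal.ofReal_le_ofReal final_large
  refine ⟨main, le_trans main (ENNReal.ofReal_le_ofReal (Real.exp_le_exp.2 ?_))⟩
  -- C₃ * max (v^p) (v^2) ≤ max (|C'*K*l|^p) ((C'*K*l)^2)
  have habs : |C' * K * l| = C' * v := by
    rw [hv, abs_mul, abs_mul, abs_of_nonneg (by linarith : (0:ℝ) ≤ C'), abs_of_nonneg hK.le, mul_assoc]
  have hsq : (C' * K * l)^2 = C'^2 * v^2 := by
    rw [hv, show (K*|l|)^2 = K^2*l^2 from by rw [mul_pow, sq_abs]]; ring
  rw [habs, hsq, Real.mul_rpow (by linarith) hv0]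
  rw [mul_max_of_nonneg _ _ hC3pos.le]
  apply max_le_max
  · apply mul_le_mul_of_nonneg_right _ (Real.rpow_nonneg hv0 p)
    calc C₃ ≤ C' := by linarith
      _ = C' ^ (1:ℝ) := (Real.rpow_one C').symm
      _ ≤ C' ^ p := Real.rpow_le_rpow_of_exponent_le hC'1 hp.le
  · apply mul_le_mul_of_nonneg_right _ (sq_nonneg v)
    nlinarith
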